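/- For every real s > 2, ∫₀^∞ h^s q₂(h) dh = (2^{−s/2}/24) s [ (s−1)(s²−2s+12) Z̃_{s/2}(0) − 4(s+4)(s+6) Z̃_{s/2}(1) + 64 Z̃_{s/2}(2) ], where Z̃_a(b) = Γ(a+2b) Z(2b, 2b; a+2b). -/

import Mathlib

open MeasureTheory

/-- The double Dirichlet series
`Z(α,β;γ) = ∑_{(n₁,n₂)∈ℤ²∖{(0,0)}} n₁^α n₂^β / (n₁²+n₂²)^γ`. -/
noncomputable def Zdd (α β : ℕ) (γ : ℝ) : ℝ :=
  ∑' n : {p : ℤ × ℤ // p ≠ (0, 0)},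
    ((n.1.1 : ℝ) ^ α * (n.1.2 : ℝ) ^ β) / ((n.1.1 : ℝ) ^ 2 + (n.1.2 : ℝ) ^ 2) ^ γ

/-- `Z̃_a(b) = Γ(a+2b) Z(2b,2b;a+2b)`. -/
noncomputable def Ztil (a : ℝ) (b : ℕ) : ℝ :=
  Real.Gamma (a + 2 * b) * Zdd (2 * b) (2 * b) (a + 2 * b)

/-- The polynomial `B_h(n₁,n₂)`. -/
noncomputable def Bpoly (h : ℝ) (n₁ n₂ : ℤ) : ℝ :=
  (8 / 3) * h * (-15 * (n₁ : ℝ) ^ 2 + 60 * h ^ 2 * (n₁ : ℝ) ^ 4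
    + 60 * h ^ 2 * (n₁ : ℝ) ^ 2 * (n₂ : ℝ) ^ 2
    - 60 * h ^ 4 * (n₁ : ℝ) ^ 6 - 180 * h ^ 4 * (n₁ : ℝ) ^ 4 * (n₂ : ℝ) ^ 2
    + 16 * h ^ 6 * (n₁ : ℝ) ^ 8 + 192 * h ^ 6 * (n₁ : ℝ) ^ 6 * (n₂ : ℝ) ^ 2
    - 80 * h ^ 6 * (n₁ : ℝ) ^ 4 * (n₂ : ℝ) ^ 4
    - 64 * h ^ 8 * (n₁ : ℝ) ^ 8 * (n₂ : ℝ) ^ 2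
    + 64 * h ^ 8 * (n₁ : ℝ) ^ 6 * (n₂ : ℝ) ^ 4)

/-- The density `q₂(h) = ∑_{(n₁,n₂)∈ℤ²∖{(0,0)}} e^{-2h²(n₁²+n₂²)} B_h(n₁,n₂)`
of the maximum height of two noncolliding Bessel bridges. -/
noncomputable def qTwo (h : ℝ) : ℝ :=
  ∑' n : {p : ℤ × ℤ // p ≠ (0, 0)},
    Real.exp (-2 * h ^ 2 * ((n.1.1 : ℝ) ^ 2 + (n.1.2 : ℝ) ^ 2)) * Bpoly h n.1.1 n.1.2

open Set

lemma Npos (m k : ℤ) (h : (m, k) ≠ ((0:ℤ), (0:ℤ))) : 0 < (m:ℝ)^2 + (k:ℝ)^2 := by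
  rcases eq_or_ne m 0 with hm | hm
  · rcases eq_or_ne k 0 with hk | hk
    · exact absurd (by rw [hm, hk]) h
    · have : (k:ℝ) ≠ 0 := Int.cast_ne_zero.mpr hk
      positivity
  · have : (m:ℝ) ≠ 0 := Int.cast_ne_zero.mpr hm
    positivity

lemma summable_base {a : ℝ} (ha : 1 < a) :
    Summable fun n : {p : ℤ × ℤ // p ≠ (0, 0)} =>
      ((n.1.1:ℝ)^2 + (n.1.2:ℝ)^2) ^ (-a) := by
  have h0 := EisensteinSeries.summable_one_div_norm_rpow (k := 2*a) (by linarith)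
  have h1 : Summable fun p : ℤ × ℤ => ‖(![p.1, p.2] : Fin 2 → ℤ)‖ ^ (-(2*a)) := by
    apply h0.comp_injective
    intro p q hpq
    have h00 := congrFun hpq 0
    have h11 := congrFun hpq 1
    simp only [Matrix.cons_val_zero, Matrix.cons_val_one, Matrix.head_cons] at h00 h11
    exact Prod.ext h00 h11
  have h2 := h1.subtype {p : ℤ × ℤ | p ≠ (0, 0)}
  apply h2.of_nonneg_of_le
  · intro n; positivity
  · intro n
    have hN := Npos n.1.1 n.1.2 n.2
    have hnorm : ‖(![n.1.1, n.1.2] : Fin 2 → ℤ)‖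
        = max (n.1.1.natAbs) (n.1.2.natAbs) := by
      simpa using EisensteinSeries.norm_eq_max_natAbs ![n.1.1, n.1.2]
    have hnormpos : 0 < ‖(![n.1.1, n.1.2] : Fin 2 → ℤ)‖ := by
      rw [norm_pos_iff]
      intro hc
      have := congrFun hc 0
      have := congrFun hc 1
      apply n.2
      refine Prod.ext ?_ ?_ <;> simpa using ‹_›
    have habs1 : ((n.1.1.natAbs : ℝ))^2 = (n.1.1:ℝ)^2 := by
      push_cast [Nat.cast_natAbs, Int.cast_abs]; exact sq_abs _
    have habs2 : ((n.1.2.natAbs : ℝ))^2 = (n.1.2:ℝ)^2 := by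
      push_cast [Nat.cast_natAbs, Int.cast_abs]; exact sq_abs _
    have hle : ‖(![n.1.1, n.1.2] : Fin 2 → ℤ)‖ ^ (2:ℕ) ≤ (n.1.1:ℝ)^2 + (n.1.2:ℝ)^2 := by
      rw [hnorm]
      push_cast
      rcases max_cases ((n.1.1.natAbs : ℝ)) ((n.1.2.natAbs : ℝ)) with ⟨hm, _⟩ | ⟨hm, _⟩ <;>
        rw [hm] <;> nlinarith [sq_nonneg ((n.1.1:ℝ)), sq_nonneg ((n.1.2:ℝ)),
          sq_nonneg ((n.1.1.natAbs : ℝ)), sq_nonneg ((n.1.2.natAbs : ℝ))]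
    calc ((n.1.1:ℝ)^2 + (n.1.2:ℝ)^2) ^ (-a)
        ≤ (‖(![n.1.1, n.1.2] : Fin 2 → ℤ)‖ ^ (2:ℕ)) ^ (-a) := by
          apply Real.rpow_le_rpow_of_nonpos (by positivity) hle (by linarith)
      _ = ‖(![n.1.1, n.1.2] : Fin 2 → ℤ)‖ ^ (-(2*a)) := by
          rw [← Real.rpow_natCast _ 2, ← Real.rpow_mul (norm_nonneg _)]
          norm_num

/-- Gaussian moment integral, in the `exp (-2*x^2*N)` shape. -/
lemma gauss_moment {N q : ℝ} (hN : 0 < N) (hq : -1 < q) :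
    ∫ x in Ioi (0:ℝ), x ^ q * Real.exp (-2*x^2*N)
      = (2*N) ^ (-(q+1)/2) * (1/2) * Real.Gamma ((q+1)/2) := by
  have hfe : (fun x : ℝ => x ^ q * Real.exp (-2*x^2*N))
      = fun x : ℝ => x ^ q * Real.exp (-(2*N) * x ^ (2:ℝ)) := by
    funext x; congr 1
    rw [Real.rpow_two]; congr 1; ring
  rw [hfe, integral_rpow_mul_exp_neg_mul_rpow two_pos hq (by linarith)]

lemma integrable_gauss {N q : ℝ} (hN : 0 < N) (hq : -1 < q) :
    IntegrableOn (fun x : ℝ => x ^ q * Real.exp (-2*x^2*N)) (Ioi 0) := by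
  have hfe : (fun x : ℝ => x ^ q * Real.exp (-2*x^2*N))
      = fun x : ℝ => x ^ q * Real.exp (-(2*N) * x ^ 2) := by
    funext x; congr 1; congr 1; ring
  rw [hfe]
  exact integrableOn_rpow_mul_exp_neg_mul_sq (by linarith) hq

/-- The sum of the five Gaussian-moment integrands. -/
noncomputable def fiveSum (s N c0 c1 c2 c3 c4 : ℝ) (h : ℝ) : ℝ :=
  c0 * (h ^ (s+1) * Real.exp (-2*h^2*N)) + c1 * (h ^ (s+3) * Real.exp (-2*h^2*N))
  + c2 * (h ^ (s+5) * Real.exp (-2*h^2*N)) + c3 * (h ^ (s+7) * Real.exp (-2*h^2*N))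
  + c4 * (h ^ (s+9) * Real.exp (-2*h^2*N))

lemma integrable_fiveSum {s N : ℝ} (hs : 2 < s) (hN : 0 < N) (c0 c1 c2 c3 c4 : ℝ) :
    IntegrableOn (fiveSum s N c0 c1 c2 c3 c4) (Ioi 0) := by
  unfold fiveSum
  have i1 := (integrable_gauss hN (by linarith : (-1:ℝ) < s+1)).const_mul c0
  have i2 := (integrable_gauss hN (by linarith : (-1:ℝ) < s+3)).const_mul c1
  have i3 := (integrable_gauss hN (by linarith : (-1:ℝ) < s+5)).const_mul c2
  have i4 := (integrable_gauss hN (by linarith : (-1:ℝ) < s+7)).const_mul c3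
  have i5 := (integrable_gauss hN (by linarith : (-1:ℝ) < s+9)).const_mul c4
  exact ((((i1.add i2).add i3).add i4).add i5)

lemma integral_fiveSum {s N : ℝ} (hs : 2 < s) (hN : 0 < N) (c0 c1 c2 c3 c4 : ℝ) :
    ∫ h in Ioi (0:ℝ), fiveSum s N c0 c1 c2 c3 c4 h
      = c0 * ((2*N) ^ (-(s/2+1)) * (1/2) * Real.Gamma (s/2+1))
      + c1 * ((2*N) ^ (-(s/2+2)) * (1/2) * Real.Gamma (s/2+2))
      + c2 * ((2*N) ^ (-(s/2+3)) * (1/2) * Real.Gamma (s/2+3))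
      + c3 * ((2*N) ^ (-(s/2+4)) * (1/2) * Real.Gamma (s/2+4))
      + c4 * ((2*N) ^ (-(s/2+5)) * (1/2) * Real.Gamma (s/2+5)) := by
  unfold fiveSum
  have i1 := (integrable_gauss hN (by linarith : (-1:ℝ) < s+1)).const_mul c0
  have i2 := (integrable_gauss hN (by linarith : (-1:ℝ) < s+3)).const_mul c1
  have i3 := (integrable_gauss hN (by linarith : (-1:ℝ) < s+5)).const_mul c2
  have i4 := (integrable_gauss hN (by linarith : (-1:ℝ) < s+7)).const_mul c3
  have i5 := (integrable_gauss hN (by linarith : (-1:ℝ) < s+9)).const_mul c4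
  have i12 : Integrable (fun h : ℝ => c0 * (h ^ (s+1) * Real.exp (-2*h^2*N))
      + c1 * (h ^ (s+3) * Real.exp (-2*h^2*N))) (volume.restrict (Ioi 0)) := i1.add i2
  have i123 : Integrable (fun h : ℝ => c0 * (h ^ (s+1) * Real.exp (-2*h^2*N))
      + c1 * (h ^ (s+3) * Real.exp (-2*h^2*N))
      + c2 * (h ^ (s+5) * Real.exp (-2*h^2*N))) (volume.restrict (Ioi 0)) := i12.add i3
  have i1234 : Integrable (fun h : ℝ => c0 * (h ^ (s+1) * Real.exp (-2*h^2*N))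
      + c1 * (h ^ (s+3) * Real.exp (-2*h^2*N))
      + c2 * (h ^ (s+5) * Real.exp (-2*h^2*N))
      + c3 * (h ^ (s+7) * Real.exp (-2*h^2*N))) (volume.restrict (Ioi 0)) := i123.add i4
  rw [integral_add i1234 i5, integral_add i123 i4, integral_add i12 i3, integral_add i1 i2,
    integral_const_mul, integral_const_mul, integral_const_mul, integral_const_mul,
    integral_const_mul,
    gauss_moment hN (by linarith : (-1:ℝ) < s+1), gauss_moment hN (by linarith : (-1:ℝ) < s+3),
    gauss_moment hN (by linarith : (-1:ℝ) < s+5), gauss_moment hN (by linarith : (-1:ℝ) < s+7),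
    gauss_moment hN (by linarith : (-1:ℝ) < s+9),
    show (-(s+1+1)/2 : ℝ) = -(s/2+1) by ring, show ((s+1+1)/2 : ℝ) = s/2+1 by ring,
    show (-(s+3+1)/2 : ℝ) = -(s/2+2) by ring, show ((s+3+1)/2 : ℝ) = s/2+2 by ring,
    show (-(s+5+1)/2 : ℝ) = -(s/2+3) by ring, show ((s+5+1)/2 : ℝ) = s/2+3 by ring,
    show (-(s+7+1)/2 : ℝ) = -(s/2+4) by ring, show ((s+7+1)/2 : ℝ) = s/2+4 by ring,
    show (-(s+9+1)/2 : ℝ) = -(s/2+5) by ring, show ((s+9+1)/2 : ℝ) = s/2+5 by ring]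

/-- Pointwise decomposition of the integrand into the five Gaussian monomials. -/
lemma integrand_eq (s : ℝ) (m k : ℤ) :
    EqOn (fun h : ℝ => h ^ s * (Real.exp (-2 * h ^ 2 * ((m:ℝ)^2 + (k:ℝ)^2)) * Bpoly h m k))
      (fiveSum s ((m:ℝ)^2 + (k:ℝ)^2)
        ((8/3) * (-15 * (m:ℝ)^2))
        ((8/3) * (60 * (m:ℝ)^4 + 60 * (m:ℝ)^2 * (k:ℝ)^2))
        ((8/3) * (-60 * (m:ℝ)^6 - 180 * (m:ℝ)^4 * (k:ℝ)^2))
        ((8/3) * (16 * (m:ℝ)^8 + 192 * (m:ℝ)^6 * (k:ℝ)^2 - 80 * (m:ℝ)^4 * (k:ℝ)^4))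
        ((8/3) * (-64 * (m:ℝ)^8 * (k:ℝ)^2 + 64 * (m:ℝ)^6 * (k:ℝ)^4)))
      (Ioi 0) := by
  intro h hh
  have hh' : (0:ℝ) < h := hh
  have e1 : h ^ (s+1) = h ^ s * h := by rw [Real.rpow_add hh', Real.rpow_one]
  have e3 : h ^ (s+3) = h ^ s * h ^ (3:ℕ) := by
    rw [Real.rpow_add hh', ← Real.rpow_natCast h 3]; norm_num
  have e5 : h ^ (s+5) = h ^ s * h ^ (5:ℕ) := by
    rw [Real.rpow_add hh', ← Real.rpow_natCast h 5]; norm_num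
  have e7 : h ^ (s+7) = h ^ s * h ^ (7:ℕ) := by
    rw [Real.rpow_add hh', ← Real.rpow_natCast h 7]; norm_num
  have e9 : h ^ (s+9) = h ^ s * h ^ (9:ℕ) := by
    rw [Real.rpow_add hh', ← Real.rpow_natCast h 9]; norm_num
  simp only [fiveSum, e1, e3, e5, e7, e9, Bpoly]
  ring

noncomputable def Ival (a x y : ℝ) : ℝ :=
  (8/3) * (-15*x) * ((2*(x+y)) ^ (-(a+1)) * (1/2) * Real.Gamma (a+1))
  + (8/3) * (60*x^2+60*x*y) * ((2*(x+y)) ^ (-(a+2)) * (1/2) * Real.Gamma (a+2))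
  + (8/3) * (-60*x^3-180*x^2*y) * ((2*(x+y)) ^ (-(a+3)) * (1/2) * Real.Gamma (a+3))
  + (8/3) * (16*x^4+192*x^3*y-80*x^2*y^2) * ((2*(x+y)) ^ (-(a+4)) * (1/2) * Real.Gamma (a+4))
  + (8/3) * (-64*x^4*y+64*x^3*y^2) * ((2*(x+y)) ^ (-(a+5)) * (1/2) * Real.Gamma (a+5))

lemma integral_point {s : ℝ} (hs : 2 < s) (m k : ℤ) (hmk : (m, k) ≠ ((0:ℤ), (0:ℤ))) :
    ∫ h in Ioi (0:ℝ), h ^ s * (Real.exp (-2 * h ^ 2 * ((m:ℝ)^2 + (k:ℝ)^2)) * Bpoly h m k)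
      = Ival (s/2) ((m:ℝ)^2) ((k:ℝ)^2) := by
  have hN : 0 < (m:ℝ)^2 + (k:ℝ)^2 := Npos m k hmk
  rw [setIntegral_congr_fun measurableSet_Ioi (integrand_eq s m k),
    integral_fiveSum hs hN]
  unfold Ival
  ring

lemma integrable_point {s : ℝ} (hs : 2 < s) (m k : ℤ) (hmk : (m, k) ≠ ((0:ℤ), (0:ℤ))) :
    IntegrableOn
      (fun h : ℝ => h ^ s * (Real.exp (-2 * h ^ 2 * ((m:ℝ)^2 + (k:ℝ)^2)) * Bpoly h m k))
      (Ioi 0) := by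
  have hN : 0 < (m:ℝ)^2 + (k:ℝ)^2 := Npos m k hmk
  exact (integrable_fiveSum hs hN _ _ _ _ _).congr_fun (integrand_eq s m k).symm
    measurableSet_Ioi

lemma abs_add_five (a b c d e : ℝ) : |a+b+c+d+e| ≤ |a|+|b|+|c|+|d|+|e| := by
  calc |a+b+c+d+e| ≤ |a+b+c+d| + |e| := abs_add_le _ _
    _ ≤ (|a+b+c| + |d|) + |e| := by gcongr; exact abs_add_le _ _
    _ ≤ ((|a+b| + |c|) + |d|) + |e| := by gcongr; exact abs_add_le _ _
    _ ≤ (((|a| + |b|) + |c|) + |d|) + |e| := by gcongr; exact abs_add_le _ _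

noncomputable def Dconst (a : ℝ) : ℝ :=
  20*Real.Gamma (a+1) + 160*Real.Gamma (a+2) + 320*Real.Gamma (a+3)
  + 384*Real.Gamma (a+4) + (512/3)*Real.Gamma (a+5)

lemma term_bound {N a : ℝ} (hN : 0 < N) (ha : 1 < a) (d : ℕ) {e : ℝ} (he : (d:ℝ) = e)
    (c K : ℝ) (hc : |c| ≤ K * N ^ d) :
    |c| * ((2*N) ^ (-(a+e)) * (1/2) * Real.Gamma (a+e))
      ≤ (K * Real.Gamma (a+e) / 2) * N ^ (-a) := by
  have he0 : 0 ≤ e := he ▸ Nat.cast_nonneg d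
  have hΓ : 0 < Real.Gamma (a+e) := Real.Gamma_pos_of_pos (by linarith)
  have hgauss : (2*N) ^ (-(a+e)) ≤ N ^ (-(a+e)) :=
    Real.rpow_le_rpow_of_nonpos hN (by linarith) (by linarith)
  have hpow : N ^ d * N ^ (-(a+e)) = N ^ (-a) := by
    rw [← Real.rpow_natCast N d, ← Real.rpow_add hN, he]
    congr 1; ring
  calc |c| * ((2*N) ^ (-(a+e)) * (1/2) * Real.Gamma (a+e))
      ≤ (K * N ^ d) * (N ^ (-(a+e)) * (1/2) * Real.Gamma (a+e)) := by
        have h1 : 0 ≤ K * N ^ d := le_trans (abs_nonneg c) hc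
        apply mul_le_mul hc ?_ (by positivity) h1
        gcongr
    _ = (K * Real.Gamma (a+e) / 2) * N ^ (-a) := by rw [← hpow]; ring

lemma fiveSum_abs_le (s N c0 c1 c2 c3 c4 h : ℝ) (hh : 0 ≤ h) :
    |fiveSum s N c0 c1 c2 c3 c4 h| ≤ fiveSum s N |c0| |c1| |c2| |c3| |c4| h := by
  unfold fiveSum
  have g1 : (0:ℝ) ≤ h ^ (s+1) * Real.exp (-2*h^2*N) := by positivity
  have g3 : (0:ℝ) ≤ h ^ (s+3) * Real.exp (-2*h^2*N) := by positivity
  have g5 : (0:ℝ) ≤ h ^ (s+5) * Real.exp (-2*h^2*N) := by positivity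
  have g7 : (0:ℝ) ≤ h ^ (s+7) * Real.exp (-2*h^2*N) := by positivity
  have g9 : (0:ℝ) ≤ h ^ (s+9) * Real.exp (-2*h^2*N) := by positivity
  refine (abs_add_five _ _ _ _ _).trans (le_of_eq ?_)
  rw [abs_mul c0, abs_mul c1, abs_mul c2, abs_mul c3, abs_mul c4,
    abs_of_nonneg g1, abs_of_nonneg g3, abs_of_nonneg g5, abs_of_nonneg g7, abs_of_nonneg g9]

set_option maxHeartbeats 2000000 in
lemma norm_integral_bound {s : ℝ} (hs : 2 < s) (m k : ℤ) (hmk : (m, k) ≠ ((0:ℤ), (0:ℤ))) :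
    (∫ h in Ioi (0:ℝ),
        ‖h ^ s * (Real.exp (-2 * h ^ 2 * ((m:ℝ)^2 + (k:ℝ)^2)) * Bpoly h m k)‖)
      ≤ Dconst (s/2) * ((m:ℝ)^2 + (k:ℝ)^2) ^ (-(s/2)) := by
  have ha : 1 < s/2 := by linarith
  have hN : 0 < (m:ℝ)^2 + (k:ℝ)^2 := Npos m k hmk
  have hx : (0:ℝ) ≤ (m:ℝ)^2 := by positivity
  have hy : (0:ℝ) ≤ (k:ℝ)^2 := by positivity
  have L : ∀ i j : ℕ, (0:ℝ) ≤ ((m:ℝ)^2)^i * ((k:ℝ)^2)^j := fun i j => by positivity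
  have hb0 : |(8/3) * (-15 * (m:ℝ)^2)| ≤ 40 * ((m:ℝ)^2 + (k:ℝ)^2) ^ (1:ℕ) :=
    abs_le.mpr ⟨by nlinarith [L 1 0, L 0 1], by nlinarith [L 1 0, L 0 1]⟩
  have hb1 : |(8/3) * (60 * (m:ℝ)^4 + 60 * (m:ℝ)^2 * (k:ℝ)^2)|
      ≤ 320 * ((m:ℝ)^2 + (k:ℝ)^2) ^ (2:ℕ) :=
    abs_le.mpr ⟨by nlinarith [L 2 0, L 1 1, L 0 2], by nlinarith [L 2 0, L 1 1, L 0 2]⟩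
  have hb2 : |(8/3) * (-60 * (m:ℝ)^6 - 180 * (m:ℝ)^4 * (k:ℝ)^2)|
      ≤ 640 * ((m:ℝ)^2 + (k:ℝ)^2) ^ (3:ℕ) :=
    abs_le.mpr ⟨by nlinarith [L 3 0, L 2 1, L 1 2, L 0 3],
      by nlinarith [L 3 0, L 2 1, L 1 2, L 0 3]⟩
  have hb3 : |(8/3) * (16 * (m:ℝ)^8 + 192 * (m:ℝ)^6 * (k:ℝ)^2 - 80 * (m:ℝ)^4 * (k:ℝ)^4)|
      ≤ 768 * ((m:ℝ)^2 + (k:ℝ)^2) ^ (4:ℕ) :=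
    abs_le.mpr ⟨by nlinarith [L 4 0, L 3 1, L 2 2, L 1 3, L 0 4],
      by nlinarith [L 4 0, L 3 1, L 2 2, L 1 3, L 0 4]⟩
  have hb4 : |(8/3) * (-64 * (m:ℝ)^8 * (k:ℝ)^2 + 64 * (m:ℝ)^6 * (k:ℝ)^4)|
      ≤ (1024/3) * ((m:ℝ)^2 + (k:ℝ)^2) ^ (5:ℕ) :=
    abs_le.mpr ⟨by nlinarith [L 5 0, L 4 1, L 3 2, L 2 3, L 1 4, L 0 5],
      by nlinarith [L 5 0, L 4 1, L 3 2, L 2 3, L 1 4, L 0 5]⟩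
  have hFint := integrable_point hs m k hmk
  have hGint := integrable_fiveSum hs hN |(8/3) * (-15 * (m:ℝ)^2)|
      |(8/3) * (60 * (m:ℝ)^4 + 60 * (m:ℝ)^2 * (k:ℝ)^2)|
      |(8/3) * (-60 * (m:ℝ)^6 - 180 * (m:ℝ)^4 * (k:ℝ)^2)|
      |(8/3) * (16 * (m:ℝ)^8 + 192 * (m:ℝ)^6 * (k:ℝ)^2 - 80 * (m:ℝ)^4 * (k:ℝ)^4)|
      |(8/3) * (-64 * (m:ℝ)^8 * (k:ℝ)^2 + 64 * (m:ℝ)^6 * (k:ℝ)^4)|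
  have step1 : (∫ h in Ioi (0:ℝ),
        ‖h ^ s * (Real.exp (-2 * h ^ 2 * ((m:ℝ)^2 + (k:ℝ)^2)) * Bpoly h m k)‖)
      ≤ ∫ h in Ioi (0:ℝ), fiveSum s ((m:ℝ)^2 + (k:ℝ)^2) |(8/3) * (-15 * (m:ℝ)^2)|
          |(8/3) * (60 * (m:ℝ)^4 + 60 * (m:ℝ)^2 * (k:ℝ)^2)|
          |(8/3) * (-60 * (m:ℝ)^6 - 180 * (m:ℝ)^4 * (k:ℝ)^2)|
          |(8/3) * (16 * (m:ℝ)^8 + 192 * (m:ℝ)^6 * (k:ℝ)^2 - 80 * (m:ℝ)^4 * (k:ℝ)^4)|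
          |(8/3) * (-64 * (m:ℝ)^8 * (k:ℝ)^2 + 64 * (m:ℝ)^6 * (k:ℝ)^4)| h := by
    apply setIntegral_mono_on (hf := hFint.norm) (hg := hGint) measurableSet_Ioi
    intro h hh
    have hh' : (0:ℝ) < h := hh
    have hEq := integrand_eq s m k hh
    beta_reduce at hEq
    rw [Real.norm_eq_abs, hEq]
    exact fiveSum_abs_le _ _ _ _ _ _ _ _ hh'.le
  refine step1.trans ?_
  rw [integral_fiveSum hs hN]
  have t0 := term_bound hN ha 1 (by norm_num : ((1:ℕ):ℝ) = 1) _ 40 hb0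
  have t1 := term_bound hN ha 2 (by norm_num : ((2:ℕ):ℝ) = 2) _ 320 hb1
  have t2 := term_bound hN ha 3 (by norm_num : ((3:ℕ):ℝ) = 3) _ 640 hb2
  have t3 := term_bound hN ha 4 (by norm_num : ((4:ℕ):ℝ) = 4) _ 768 hb3
  have t4 := term_bound hN ha 5 (by norm_num : ((5:ℕ):ℝ) = 5) _ (1024/3) hb4
  refine (add_le_add (add_le_add (add_le_add (add_le_add t0 t1) t2) t3) t4).trans ?_
  unfold Dconst
  apply le_of_eq
  ring

noncomputable def A0 (a : ℝ) : ℝ := 2 ^ (-a) * Real.Gamma a * a * (2*a^3-3*a^2+7*a-3) / 3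
noncomputable def A1 (a : ℝ) : ℝ := -(4/3) * 2 ^ (-a) * a * (a+2) * (a+3) * Real.Gamma (a+2)
noncomputable def A2 (a : ℝ) : ℝ := (16/3) * 2 ^ (-a) * a * Real.Gamma (a+4)

set_option maxHeartbeats 2000000 in
lemma Ival_sym {a : ℝ} (ha : 1 < a) {x y : ℝ} (hx : 0 ≤ x) (hy : 0 ≤ y) (hN : 0 < x + y) :
    (Ival a x y + Ival a y x) / 2
      = A0 a * (1 / (x+y) ^ a) + A1 a * ((x*y) / (x+y) ^ (a+2))
        + A2 a * ((x^2*y^2) / (x+y) ^ (a+4)) := by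
  have ha0 : a ≠ 0 := by linarith
  have key : ∀ (z : ℝ), 0 < z → ∀ (d : ℕ), z ^ (-(a+5) + (d:ℝ)) = z ^ (-(a+5)) * z ^ d :=
    fun z hz d => by rw [Real.rpow_add hz, Real.rpow_natCast]
  have hb : (0:ℝ) < 2*(x+y) := by linarith
  have hG2 : Real.Gamma (a+2) = (a+1) * Real.Gamma (a+1) := by
    rw [show a+2 = (a+1)+1 by ring, Real.Gamma_add_one (by linarith : a+(1:ℝ) ≠ 0)]
  have hG3 : Real.Gamma (a+3) = (a+2) * ((a+1) * Real.Gamma (a+1)) := by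
    rw [show a+3 = (a+2)+1 by ring, Real.Gamma_add_one (by linarith : a+(2:ℝ) ≠ 0), hG2]
  have hG4 : Real.Gamma (a+4) = (a+3) * ((a+2) * ((a+1) * Real.Gamma (a+1))) := by
    rw [show a+4 = (a+3)+1 by ring, Real.Gamma_add_one (by linarith : a+(3:ℝ) ≠ 0), hG3]
  have hG5 : Real.Gamma (a+5) = (a+4) * ((a+3) * ((a+2) * ((a+1) * Real.Gamma (a+1)))) := by
    rw [show a+5 = (a+4)+1 by ring, Real.Gamma_add_one (by linarith : a+(4:ℝ) ≠ 0), hG4]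
  have hG0 : Real.Gamma a = Real.Gamma (a+1) / a := by
    rw [Real.Gamma_add_one ha0]; field_simp
  have p1 : (2*(x+y)) ^ (-(a+1)) = (2*(x+y)) ^ (-(a+5)) * (2*(x+y)) ^ (4:ℕ) := by
    rw [← key _ hb 4]; congr 1; push_cast; ring
  have p2 : (2*(x+y)) ^ (-(a+2)) = (2*(x+y)) ^ (-(a+5)) * (2*(x+y)) ^ (3:ℕ) := by
    rw [← key _ hb 3]; congr 1; push_cast; ring
  have p3 : (2*(x+y)) ^ (-(a+3)) = (2*(x+y)) ^ (-(a+5)) * (2*(x+y)) ^ (2:ℕ) := by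
    rw [← key _ hb 2]; congr 1; push_cast; ring
  have p4 : (2*(x+y)) ^ (-(a+4)) = (2*(x+y)) ^ (-(a+5)) * (2*(x+y)) ^ (1:ℕ) := by
    rw [← key _ hb 1]; congr 1; push_cast; ring
  have psplit : (2*(x+y)) ^ (-(a+5)) = 2 ^ (-(a+5)) * (x+y) ^ (-(a+5)) :=
    Real.mul_rpow (by norm_num) hN.le
  have q0 : (2:ℝ) ^ (-a) = 2 ^ (-(a+5)) * 2 ^ (5:ℕ) := by
    rw [← key 2 two_pos 5]; congr 1; push_cast; ring
  have r0 : 1/(x+y) ^ a = (x+y) ^ (-(a+5)) * (x+y) ^ (5:ℕ) := by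
    rw [← key _ hN 5, show (-(a+5) + ((5:ℕ):ℝ)) = -a by push_cast; ring,
      Real.rpow_neg hN.le, one_div]
  have r1 : (x*y) / (x+y) ^ (a+2) = x*y*((x+y) ^ (-(a+5)) * (x+y) ^ (3:ℕ)) := by
    rw [← key _ hN 3, show (-(a+5) + ((3:ℕ):ℝ)) = -(a+2) by push_cast; ring,
      Real.rpow_neg hN.le, div_eq_mul_inv]
  have r2 : (x^2*y^2) / (x+y) ^ (a+4) = x^2*y^2*((x+y) ^ (-(a+5)) * (x+y) ^ (1:ℕ)) := by
    rw [← key _ hN 1, show (-(a+5) + ((1:ℕ):ℝ)) = -(a+4) by push_cast; ring,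
      Real.rpow_neg hN.le, div_eq_mul_inv]
  unfold Ival A0 A1 A2
  rw [add_comm y x, r0, r1, r2, p1, p2, p3, p4, psplit, q0, hG0, hG2, hG3, hG4, hG5]
  field_simp
  ring

lemma assembly (s : ℝ) :
    (2 ^ (-s / 2) / 24) * s *
        ((s - 1) * (s ^ 2 - 2 * s + 12) * Ztil (s / 2) 0
          - 4 * (s + 4) * (s + 6) * Ztil (s / 2) 1
          + 64 * Ztil (s / 2) 2)
      = A0 (s/2) * Zdd 0 0 (s/2) + A1 (s/2) * Zdd 2 2 (s/2+2) + A2 (s/2) * Zdd 4 4 (s/2+4) := by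
  unfold Ztil A0 A1 A2
  norm_num
  rw [show (-s/2 : ℝ) = -(s/2) by ring]
  ring

lemma div_rpow_le {N a c : ℝ} (hN : 0 < N) (d : ℕ) (hc : c ≤ N ^ d) {e : ℝ}
    (he : e = a + d) : c / N ^ e ≤ N ^ (-a) := by
  rw [div_le_iff₀ (Real.rpow_pos_of_pos hN e)]
  calc c ≤ N ^ d := hc
    _ = N ^ (-a) * N ^ e := by
        rw [← Real.rpow_natCast N d, ← Real.rpow_add hN, he]; congr 1; ring

/-- The coordinate-swap equivalence of the punctured lattice. -/
def swapE : {p : ℤ × ℤ // p ≠ (0, 0)} ≃ {p : ℤ × ℤ // p ≠ (0, 0)} where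
  toFun n := ⟨(n.1.2, n.1.1), fun hc => n.2 (by
    rw [Prod.ext_iff] at hc ⊢; exact ⟨hc.2, hc.1⟩)⟩
  invFun n := ⟨(n.1.2, n.1.1), fun hc => n.2 (by
    rw [Prod.ext_iff] at hc ⊢; exact ⟨hc.2, hc.1⟩)⟩
  left_inv n := rfl
  right_inv n := rfl


set_option maxHeartbeats 1000000 in
/-- For every real `s > 2`, the `s`-th moment of `H₂` is
`(2^{-s/2}/24) s [ (s-1)(s²-2s+12) Z̃_{s/2}(0) - 4(s+4)(s+6) Z̃_{s/2}(1) + 64 Z̃_{s/2}(2) ]`. -/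
theorem moment_H2_Ztil (s : ℝ) (hs : 2 < s) :
    (∫ h in Set.Ioi (0 : ℝ), h ^ s * qTwo h)
      = (2 ^ (-s / 2) / 24) * s *
        ((s - 1) * (s ^ 2 - 2 * s + 12) * Ztil (s / 2) 0
          - 4 * (s + 4) * (s + 6) * Ztil (s / 2) 1
          + 64 * Ztil (s / 2) 2) := by
  have ha : 1 < s/2 := by linarith
  have hFint : ∀ n : {p : ℤ × ℤ // p ≠ (0, 0)}, IntegrableOn
      (fun h : ℝ => h ^ s * (Real.exp (-2 * h ^ 2 * ((n.1.1:ℝ)^2 + (n.1.2:ℝ)^2))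
        * Bpoly h n.1.1 n.1.2)) (Ioi 0) :=
    fun n => integrable_point hs n.1.1 n.1.2 n.2
  have hsumbound : Summable (fun n : {p : ℤ × ℤ // p ≠ (0, 0)} =>
      ∫ h in Ioi (0:ℝ), ‖h ^ s * (Real.exp (-2 * h ^ 2 * ((n.1.1:ℝ)^2 + (n.1.2:ℝ)^2))
        * Bpoly h n.1.1 n.1.2)‖) := by
    refine Summable.of_nonneg_of_le (fun n => integral_nonneg fun h => norm_nonneg _)
      (fun n => norm_integral_bound hs n.1.1 n.1.2 n.2)
      ((summable_base ha).mul_left (Dconst (s/2)))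
  have hSsum : Summable (fun n : {p : ℤ × ℤ // p ≠ (0, 0)} =>
      Ival (s/2) ((n.1.1:ℝ)^2) ((n.1.2:ℝ)^2)) := by
    apply Summable.of_norm_bounded hsumbound
    intro n
    rw [← integral_point hs n.1.1 n.1.2 n.2]
    exact norm_integral_le_integral_norm _
  have hSesum : Summable (fun n : {p : ℤ × ℤ // p ≠ (0, 0)} =>
      Ival (s/2) (((swapE n).1.1:ℝ)^2) (((swapE n).1.2:ℝ)^2)) :=
    (swapE.summable_iff (f := fun n : {p : ℤ × ℤ // p ≠ (0, 0)} =>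
      Ival (s/2) ((n.1.1:ℝ)^2) ((n.1.2:ℝ)^2))).mpr hSsum
  -- summability of the three Dirichlet-type series
  have sw0 : Summable (fun n : {p : ℤ × ℤ // p ≠ (0, 0)} =>
      ((n.1.1:ℝ)^(0:ℕ) * (n.1.2:ℝ)^(0:ℕ)) / ((n.1.1:ℝ)^2 + (n.1.2:ℝ)^2) ^ (s/2)) := by
    apply (summable_base ha).congr
    intro n
    have hN := Npos n.1.1 n.1.2 n.2
    rw [pow_zero, pow_zero, one_mul, Real.rpow_neg hN.le, one_div]
  have sw1 : Summable (fun n : {p : ℤ × ℤ // p ≠ (0, 0)} =>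
      ((n.1.1:ℝ)^(2:ℕ) * (n.1.2:ℝ)^(2:ℕ)) / ((n.1.1:ℝ)^2 + (n.1.2:ℝ)^2) ^ (s/2+2)) := by
    apply Summable.of_nonneg_of_le ?_ ?_ (summable_base ha)
    · intro n
      have hN := Npos n.1.1 n.1.2 n.2
      positivity
    · intro n
      have hN := Npos n.1.1 n.1.2 n.2
      refine div_rpow_le hN 2 ?_ (by norm_num)
      nlinarith [sq_nonneg ((n.1.1:ℝ)), sq_nonneg ((n.1.2:ℝ)),
        sq_nonneg ((n.1.1:ℝ)^2 - (n.1.2:ℝ)^2), sq_nonneg ((n.1.1:ℝ)*(n.1.2:ℝ))]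
  have sw2 : Summable (fun n : {p : ℤ × ℤ // p ≠ (0, 0)} =>
      ((n.1.1:ℝ)^(4:ℕ) * (n.1.2:ℝ)^(4:ℕ)) / ((n.1.1:ℝ)^2 + (n.1.2:ℝ)^2) ^ (s/2+4)) := by
    apply Summable.of_nonneg_of_le ?_ ?_ (summable_base ha)
    · intro n
      have hN := Npos n.1.1 n.1.2 n.2
      positivity
    · intro n
      have hN := Npos n.1.1 n.1.2 n.2
      refine div_rpow_le hN 4 ?_ (by norm_num)
      have L : ∀ i j : ℕ, (0:ℝ) ≤ ((n.1.1:ℝ)^2)^i * ((n.1.2:ℝ)^2)^j := fun i j => by positivity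
      nlinarith [L 4 0, L 3 1, L 2 2, L 1 3, L 0 4]
  -- step 1 : exchange integral and sum
  have step1 : (∫ h in Set.Ioi (0 : ℝ), h ^ s * qTwo h)
      = ∑' n : {p : ℤ × ℤ // p ≠ (0, 0)},
          ∫ h in Ioi (0:ℝ), h ^ s * (Real.exp (-2 * h ^ 2 * ((n.1.1:ℝ)^2 + (n.1.2:ℝ)^2))
            * Bpoly h n.1.1 n.1.2) := by
    simp only [qTwo, ← tsum_mul_left]
    exact (integral_tsum_of_summable_integral_norm hFint hsumbound).symm
  rw [step1]
  -- step 2 : evaluate each integral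
  rw [tsum_congr (fun n : {p : ℤ × ℤ // p ≠ (0, 0)} =>
    integral_point hs n.1.1 n.1.2 n.2)]
  -- step 3 : symmetrize
  have hswap : ∑' n : {p : ℤ × ℤ // p ≠ (0, 0)},
      Ival (s/2) (((swapE n).1.1:ℝ)^2) (((swapE n).1.2:ℝ)^2)
      = ∑' n : {p : ℤ × ℤ // p ≠ (0, 0)}, Ival (s/2) ((n.1.1:ℝ)^2) ((n.1.2:ℝ)^2) :=
    swapE.tsum_eq (fun n : {p : ℤ × ℤ // p ≠ (0, 0)} =>
      Ival (s/2) ((n.1.1:ℝ)^2) ((n.1.2:ℝ)^2))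
  have step3 : ∑' n : {p : ℤ × ℤ // p ≠ (0, 0)}, Ival (s/2) ((n.1.1:ℝ)^2) ((n.1.2:ℝ)^2)
      = ∑' n : {p : ℤ × ℤ // p ≠ (0, 0)},
          (Ival (s/2) ((n.1.1:ℝ)^2) ((n.1.2:ℝ)^2)
            + Ival (s/2) ((n.1.2:ℝ)^2) ((n.1.1:ℝ)^2)) / 2 := by
    have hadd := Summable.tsum_add hSsum hSesum
    have : (fun n : {p : ℤ × ℤ // p ≠ (0, 0)} =>
        (Ival (s/2) ((n.1.1:ℝ)^2) ((n.1.2:ℝ)^2)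
          + Ival (s/2) ((n.1.2:ℝ)^2) ((n.1.1:ℝ)^2)) / 2)
        = fun n : {p : ℤ × ℤ // p ≠ (0, 0)} =>
        (Ival (s/2) ((n.1.1:ℝ)^2) ((n.1.2:ℝ)^2)
          + Ival (s/2) (((swapE n).1.1:ℝ)^2) (((swapE n).1.2:ℝ)^2)) / 2 := rfl
    rw [this, tsum_div_const, hadd, hswap]
    ring
  rw [step3]
  -- step 4 : pointwise identity and split the sum
  have step4 : ∀ n : {p : ℤ × ℤ // p ≠ (0, 0)},
      (Ival (s/2) ((n.1.1:ℝ)^2) ((n.1.2:ℝ)^2)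
        + Ival (s/2) ((n.1.2:ℝ)^2) ((n.1.1:ℝ)^2)) / 2
      = A0 (s/2) * (((n.1.1:ℝ)^(0:ℕ) * (n.1.2:ℝ)^(0:ℕ))
            / ((n.1.1:ℝ)^2 + (n.1.2:ℝ)^2) ^ (s/2))
        + A1 (s/2) * (((n.1.1:ℝ)^(2:ℕ) * (n.1.2:ℝ)^(2:ℕ))
            / ((n.1.1:ℝ)^2 + (n.1.2:ℝ)^2) ^ (s/2+2))
        + A2 (s/2) * (((n.1.1:ℝ)^(4:ℕ) * (n.1.2:ℝ)^(4:ℕ))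
            / ((n.1.1:ℝ)^2 + (n.1.2:ℝ)^2) ^ (s/2+4)) := by
    intro n
    have hN := Npos n.1.1 n.1.2 n.2
    rw [Ival_sym ha (by positivity) (by positivity) hN]
    norm_num
    rw [show ((n.1.1:ℝ)^2)^2 * ((n.1.2:ℝ)^2)^2 = (n.1.1:ℝ)^4 * (n.1.2:ℝ)^4 by ring]
    exact Or.inl rfl
  rw [tsum_congr step4, Summable.tsum_add ((sw0.mul_left _).add (sw1.mul_left _)) (sw2.mul_left _),
    Summable.tsum_add (sw0.mul_left _) (sw1.mul_left _), tsum_mul_left, tsum_mul_left, tsum_mul_left,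
    assembly s, Zdd, Zdd, Zdd]
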